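/- For the torus with radii R > r > 0 and any u, v, θ, φ ∈ ℝ, the four points X = p(u, θ), Y = p(v, φ), Z₁ = p(v, θ), Z₂ = p(u, φ) are coplanar; that is, the three vectors Z₁ − X, Z₂ − X and Y − X are linearly dependent (the 3×3 determinant whose rows are these vectors vanishes). -/
import Mathlib


open Real

/-- The torus of radii `(R, r)` parametrized by longitude `u` and latitude `θ`. -/
noncomputable def torusPoint (R r u θ : ℝ) : Fin 3 → ℝ :=
  ![(R - r * Real.cos θ) * Real.cos u, (R - r * Real.cos θ) * Real.sin u, r * Real.sin θ]

/-- For the torus with radii `R > r > 0` and any `u, v, θ, φ ∈ ℝ`, the four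
points `X = p(u, θ)`, `Y = p(v, φ)`, `Z₁ = p(v, θ)`, `Z₂ = p(u, φ)` are coplanar: the 3×3
determinant whose rows are `Z₁ − X`, `Z₂ − X`, `Y − X` vanishes. -/
theorem torus_four_points_coplanar (R r : ℝ) (hRr : R > r) (hr : r > 0)
    (u v θ φ : ℝ) :
    Matrix.det (Matrix.of
      ![torusPoint R r v θ - torusPoint R r u θ,
        torusPoint R r u φ - torusPoint R r u θ,
        torusPoint R r v φ - torusPoint R r u θ]) = 0 := by
  simp only [torusPoint, Matrix.det_fin_three, Matrix.of_apply, Pi.sub_apply,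
    Matrix.cons_val', Matrix.cons_val_zero, Matrix.cons_val_one, Matrix.head_cons,
    Matrix.empty_val', Matrix.cons_val_fin_one, Matrix.head_fin_const,
    Matrix.cons_val_two, Matrix.tail_cons]
  ring
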